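/- arXiv:1710.02937 — 2 statements merged into one kernel-verified Lean document; each statement's English description precedes it below -/
import Mathlib

section
/- Let A, B be strictly positive bounded operators on a complex Hilbert space with A ≤ B and m·1 ≤ B ≤ M·1 for scalars 0 < m < M. Then for p ≤ 0 and -1 ≤ q ≤ 0: B^p ≤ exp( ((M·1 - B)/(M-m))·ln m^p + ((B - m·1)/(M-m))·ln M^p ) ≤ K(m,M,p,q)·A^q, where K(m,M,p,q) = (m M^p - M m^p)/((q-1)(M-m)) · ( ((q-1)/q)·(M^p - m^p)/(m M^p - M m^p) )^q when m ≤ q(m M^p - M m^p)/((q-1)(M^p - m^p)) ≤ M, and K(m,M,p,q) = max{m^(p-q), M^(p-q)} otherwise. -/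
set_option maxHeartbeats 1000000
set_option linter.unusedSectionVars false
set_option linter.unusedVariables false

open Real Set CFC
open scoped NNReal ENNReal

open Real Set

/-- Tangent line bound for concave `t ↦ t^r`, `r ∈ [0,1]`, multiplied through by `c`. -/
lemma tangent_rpow {c t r : ℝ} (hc : 0 < c) (ht : 0 < t) (hr0 : 0 ≤ r) (hr1 : r ≤ 1) :
    t ^ r * c ≤ c ^ r * (c + r * (t - c)) := by
  have hcr : (0:ℝ) < c ^ r := Real.rpow_pos_of_pos hc r
  have hs : (-1:ℝ) ≤ t / c - 1 := by
    have : 0 < t / c := div_pos ht hc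
    linarith
  have h2 : (1 + (t / c - 1)) ^ r ≤ 1 + r * (t / c - 1) :=
    rpow_one_add_le_one_add_mul_self hs hr0 hr1
  have h3 : (t / c) ^ r ≤ 1 + r * (t / c - 1) := by simpa using h2
  have h4 : t ^ r = c ^ r * (t / c) ^ r := by
    rw [Real.div_rpow ht.le hc.le]; field_simp
  have h5 : t ^ r ≤ c ^ r * (1 + r * (t / c - 1)) := by
    rw [h4]; exact mul_le_mul_of_nonneg_left h3 hcr.le
  have h6 := mul_le_mul_of_nonneg_right h5 hc.le
  calc t ^ r * c ≤ c ^ r * (1 + r * (t / c - 1)) * c := h6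
    _ = c ^ r * (c + r * (t - c)) := by field_simp

lemma rpow_base_antitone {x y : ℝ} (hx : 0 < x) (hxy : x < y) {p : ℝ} (hp : p ≤ 0) :
    y ^ p ≤ x ^ p := by
  have hy : 0 < y := hx.trans hxy
  rw [Real.rpow_def_of_pos hx, Real.rpow_def_of_pos hy]
  exact Real.exp_le_exp.mpr (by nlinarith [Real.log_lt_log hx hxy])

lemma rpow_base_strict_antitone {x y : ℝ} (hx : 0 < x) (hxy : x < y) {p : ℝ} (hp : p < 0) :
    y ^ p < x ^ p := by
  have hy : 0 < y := hx.trans hxy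
  rw [Real.rpow_def_of_pos hx, Real.rpow_def_of_pos hy]
  exact Real.exp_lt_exp.mpr (by nlinarith [Real.log_lt_log hx hxy])

lemma scalar_main (m M p q K : ℝ) (hm : 0 < m) (hmM : m < M) (hp : p ≤ 0)
    (hq1 : -1 ≤ q) (hq0 : q ≤ 0)
    (hK : K =
      if q * (m * M ^ p - M * m ^ p) / ((q - 1) * (M ^ p - m ^ p)) ∈ Set.Icc m M then
        (m * M ^ p - M * m ^ p) / ((q - 1) * (M - m)) *
          (((q - 1) / q) * (M ^ p - m ^ p) / (m * M ^ p - M * m ^ p)) ^ q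
      else
        max (m ^ (p - q)) (M ^ (p - q))) :
    ∀ t ∈ Set.Icc m M,
      ((M - t) / (M - m)) * m ^ p + ((t - m) / (M - m)) * M ^ p ≤ K * t ^ q := by
  have hM : 0 < M := hm.trans hmM
  have hd : (0:ℝ) < M - m := by linarith
  have hd' : (M - m) ≠ 0 := ne_of_gt hd
  have hmp : 0 < m ^ p := Real.rpow_pos_of_pos hm p
  have hMp : 0 < M ^ p := Real.rpow_pos_of_pos hM p
  have hMp_le : M ^ p ≤ m ^ p := rpow_base_antitone hm hmM hp
  obtain ⟨a', ha'd⟩ : ∃ a' : ℝ, a' * (M - m) = M ^ p - m ^ p :=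
    ⟨(M ^ p - m ^ p) / (M - m), div_mul_cancel₀ _ hd'⟩
  obtain ⟨b', hb'd⟩ : ∃ b' : ℝ, b' * (M - m) = M * m ^ p - m * M ^ p :=
    ⟨(M * m ^ p - m * M ^ p) / (M - m), div_mul_cancel₀ _ hd'⟩
  have ha'0 : a' ≤ 0 := by nlinarith
  have hb'0 : 0 < b' := by nlinarith [mul_pos hd hMp, mul_nonneg hM.le (sub_nonneg.mpr hMp_le)]
  have hLfun : ∀ t : ℝ, ((M - t) / (M - m)) * m ^ p + ((t - m) / (M - m)) * M ^ p
      = a' * t + b' := by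
    intro t
    apply mul_right_cancel₀ hd'
    rw [add_mul,
      show (M - t) / (M - m) * m ^ p * (M - m) = (M - t) / (M - m) * (M - m) * m ^ p from by ring,
      show (t - m) / (M - m) * M ^ p * (M - m) = (t - m) / (M - m) * (M - m) * M ^ p from by ring,
      div_mul_cancel₀ _ hd', div_mul_cancel₀ _ hd']
    linear_combination (-t) * ha'd - hb'd
  have hLpos : ∀ t ∈ Set.Icc m M, 0 ≤ a' * t + b' := by
    rintro t ⟨htm, htM⟩
    have h : 0 ≤ (a' * t + b') * (M - m) := by
      nlinarith [mul_nonneg (sub_nonneg.mpr htM) hmp.le, mul_nonneg (sub_nonneg.mpr htm) hMp.le]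
    nlinarith
  suffices Hclaim : ∀ t ∈ Set.Icc m M, (a' * t + b') * t ^ (-q) ≤ K by
    rintro t ⟨htm, htM⟩
    have ht0 : 0 < t := lt_of_lt_of_le hm htm
    have htq : 0 < t ^ q := Real.rpow_pos_of_pos ht0 q
    have h1 : t ^ (-q) * t ^ q = 1 := by
      rw [← Real.rpow_add ht0]; simp
    have h2 := mul_le_mul_of_nonneg_right (Hclaim t ⟨htm, htM⟩) htq.le
    rw [hLfun t]
    calc a' * t + b' = (a' * t + b') * (t ^ (-q) * t ^ q) := by rw [h1, mul_one]
      _ = (a' * t + b') * t ^ (-q) * t ^ q := by ring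
      _ ≤ K * t ^ q := h2
  rw [hK]
  split_ifs with hcond
  · -- critical point inside [m, M]
    obtain ⟨ht0m, ht0M⟩ := hcond
    obtain ⟨t0, ht0_def⟩ : ∃ x : ℝ, x = q * (m * M ^ p - M * m ^ p) / ((q - 1) * (M ^ p - m ^ p)) :=
      ⟨_, rfl⟩
    rw [← ht0_def] at ht0m ht0M
    have ht0pos : 0 < t0 := lt_of_lt_of_le hm ht0m
    have hqne : q ≠ 0 := by
      intro hqz
      rw [ht0_def, hqz] at ht0pos
      simp at ht0pos
    have hq : q < 0 := lt_of_le_of_ne hq0 hqne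
    have hpne : p ≠ 0 := by
      intro hpz
      rw [ht0_def, hpz] at ht0pos
      simp at ht0pos
    have hp' : p < 0 := lt_of_le_of_ne hp hpne
    have hMp_lt : M ^ p < m ^ p := rpow_base_strict_antitone hm hmM hp'
    have ha' : a' < 0 := by nlinarith
    have hq1' : q - 1 ≠ 0 := by linarith
    have hMpmp : M ^ p - m ^ p ≠ 0 := by linarith
    have hnum : m * M ^ p - M * m ^ p ≠ 0 := by nlinarith [mul_pos hm hMp]
    have e1 : t0 * ((q - 1) * (M ^ p - m ^ p)) = q * (m * M ^ p - M * m ^ p) := by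
      rw [ht0_def]
      exact div_mul_cancel₀ _ (mul_ne_zero hq1' hMpmp)
    have hid : a' * (1 - q) * t0 = q * b' := by
      apply mul_right_cancel₀ hd'
      linear_combination ((1 - q) * t0) * ha'd - q * hb'd - e1
    have h1q : (1:ℝ) - q ≠ 0 := by linarith
    have hbase : ((q - 1) / q) * (M ^ p - m ^ p) / (m * M ^ p - M * m ^ p) = t0⁻¹ := by
      apply eq_inv_of_mul_eq_one_left
      rw [ht0_def]
      field_simp
      exact div_self (by intro h; apply hnum; linarith)
    have hfac : (m * M ^ p - M * m ^ p) / ((q - 1) * (M - m)) = b' / (1 - q) := by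
      rw [div_eq_div_iff (mul_ne_zero hq1' hd') h1q]
      linear_combination (1 - q) * hb'd
    have hval : a' * t0 + b' = b' / (1 - q) := by
      rw [eq_div_iff h1q]
      linear_combination hid
    have hKid : (m * M ^ p - M * m ^ p) / ((q - 1) * (M - m)) *
        (((q - 1) / q) * (M ^ p - m ^ p) / (m * M ^ p - M * m ^ p)) ^ q
        = (a' * t0 + b') * t0 ^ (-q) := by
      rw [hbase, hfac, hval, Real.inv_rpow ht0pos.le, ← Real.rpow_neg ht0pos.le]
    rw [hKid]
    rintro t ⟨htm, htM⟩
    have ht : 0 < t := lt_of_lt_of_le hm htm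
    have htan : t ^ (-q) * t0 ≤ t0 ^ (-q) * (t0 + (-q) * (t - t0)) :=
      tangent_rpow ht0pos ht (by linarith) (by linarith)
    have hX : 0 < t0 ^ (-q) := Real.rpow_pos_of_pos ht0pos (-q)
    have hL := hLpos t ⟨htm, htM⟩
    have hid' : a' * (1 - q) * t0 * (t - t0) = q * b' * (t - t0) := by
      rw [hid]
    have haq : 0 ≤ a' * q := by nlinarith [mul_nonneg (neg_nonneg.mpr ha'0) (neg_nonneg.mpr hq0)]
    have hstep : (a' * t + b') * (t0 + (-q) * (t - t0)) ≤ ((a' * t0 + b') * t0) := by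
      have key : (a' * t0 + b') * t0 - (a' * t + b') * (t0 + (-q) * (t - t0))
          = a' * q * (t - t0) ^ 2 + (q * b' * (t - t0) - a' * (1 - q) * t0 * (t - t0)) := by
        ring
      linarith [key, hid', mul_nonneg haq (sq_nonneg (t - t0))]
    apply le_of_mul_le_mul_right _ ht0pos
    calc (a' * t + b') * t ^ (-q) * t0
        = (a' * t + b') * (t ^ (-q) * t0) := by ring
      _ ≤ (a' * t + b') * (t0 ^ (-q) * (t0 + (-q) * (t - t0))) :=
          mul_le_mul_of_nonneg_left htan hL
      _ = ((a' * t + b') * (t0 + (-q) * (t - t0))) * t0 ^ (-q) := by ring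
      _ ≤ ((a' * t0 + b') * t0) * t0 ^ (-q) := mul_le_mul_of_nonneg_right hstep hX.le
      _ = (a' * t0 + b') * t0 ^ (-q) * t0 := by ring
  · -- condition fails
    by_cases hqz : q = 0
    · subst hqz
      rintro t ⟨htm, htM⟩
      have ht : 0 < t := lt_of_lt_of_le hm htm
      rw [neg_zero, Real.rpow_zero, mul_one]
      have h : (a' * t + b') * (M - m) ≤ m ^ p * (M - m) := by
        nlinarith [mul_nonneg (sub_nonneg.mpr htm) (sub_nonneg.mpr hMp_le)]
      have h2 : a' * t + b' ≤ m ^ p := by nlinarith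
      calc a' * t + b' ≤ m ^ p := h2
        _ = m ^ (p - 0) := by rw [sub_zero]
        _ ≤ max (m ^ (p - 0)) (M ^ (p - 0)) := le_max_left _ _
    · have hq : q < 0 := lt_of_le_of_ne hq0 hqz
      by_cases hpz : p = 0
      · subst hpz
        rintro t ⟨htm, htM⟩
        have ht : 0 < t := lt_of_lt_of_le hm htm
        have hL1 : a' * t + b' = 1 := by
          have hz : a' * (M - m) = 0 := by
            rw [ha'd, Real.rpow_zero, Real.rpow_zero, sub_self]
          have ha'z : a' = 0 := by
            rcases mul_eq_zero.mp hz with h | h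
            · exact h
            · exact absurd h hd'
          have hb1 : b' * (M - m) = M - m := by
            rw [hb'd, Real.rpow_zero, Real.rpow_zero]; ring
          have hb'1 : b' = 1 := by
            have := mul_right_cancel₀ hd' (hb1.trans (one_mul (M - m)).symm)
            exact this
          rw [ha'z, hb'1]; ring
        rw [hL1, one_mul]
        have h1 : t ^ (-q) ≤ M ^ (-q) :=
          Real.rpow_le_rpow ht.le htM (by linarith)
        calc t ^ (-q) ≤ M ^ (-q) := h1
          _ = M ^ (0 - q) := by rw [zero_sub]
          _ ≤ max (m ^ (0 - q)) (M ^ (0 - q)) := le_max_right _ _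
      · have hp' : p < 0 := lt_of_le_of_ne hp hpz
        have hMp_lt : M ^ p < m ^ p := rpow_base_strict_antitone hm hmM hp'
        have ha' : a' < 0 := by nlinarith
        have hq1' : q - 1 ≠ 0 := by linarith
        have hMpmp : M ^ p - m ^ p ≠ 0 := by linarith
        have hnum : m * M ^ p - M * m ^ p ≠ 0 := by nlinarith [mul_pos hm hMp]
        obtain ⟨t0, ht0_def⟩ : ∃ x : ℝ,
            x = q * (m * M ^ p - M * m ^ p) / ((q - 1) * (M ^ p - m ^ p)) := ⟨_, rfl⟩
        rw [← ht0_def] at hcond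
        have ht0pos : 0 < t0 := by
          rw [ht0_def]
          apply div_pos
          · have hneg : m * M ^ p - M * m ^ p < 0 := by
              nlinarith [mul_lt_mul_of_pos_left hMp_lt hm, mul_lt_mul_of_pos_right hmM hmp]
            exact mul_pos_of_neg_of_neg hq hneg
          · nlinarith
        have e1 : t0 * ((q - 1) * (M ^ p - m ^ p)) = q * (m * M ^ p - M * m ^ p) := by
          rw [ht0_def]
          exact div_mul_cancel₀ _ (mul_ne_zero hq1' hMpmp)
        have hid : a' * (1 - q) * t0 = q * b' := by
          apply mul_right_cancel₀ hd'
          linear_combination ((1 - q) * t0) * ha'd - q * hb'd - e1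
        have hsplit : t0 < m ∨ M < t0 := by
          by_contra hcon
          push_neg at hcon
          exact hcond ⟨hcon.1, hcon.2⟩
        rintro t ⟨htm, htM⟩
        have ht : 0 < t := lt_of_lt_of_le hm htm
        have hL := hLpos t ⟨htm, htM⟩
        rcases hsplit with hlt | hgt
        · -- t0 < m : use tangent at m
          have htan : t ^ (-q) * m ≤ m ^ (-q) * (m + (-q) * (t - m)) :=
            tangent_rpow hm ht (by linarith) (by linarith)
          have hX : 0 < m ^ (-q) := Real.rpow_pos_of_pos hm (-q)
          have hid' : a' * (1 - q) * t0 * (t - m) = q * b' * (t - m) := by rw [hid]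
          have haq : 0 ≤ a' * q := by
            nlinarith [mul_nonneg (neg_nonneg.mpr ha'.le) (neg_nonneg.mpr hq0)]
          have hstep : (a' * t + b') * (m + (-q) * (t - m)) ≤ (a' * m + b') * m := by
            have key : (a' * m + b') * m - (a' * t + b') * (m + (-q) * (t - m))
                = a' * (t0 - m) * (t - m) + a' * q * (t - t0) * (t - m)
                  + (q * b' * (t - m) - a' * (1 - q) * t0 * (t - m)) := by
              ring
            have h1 : 0 ≤ a' * (t0 - m) * (t - m) := by
              have := mul_nonneg (neg_nonneg.mpr ha'.le)
                (neg_nonneg.mpr (by linarith : t0 - m ≤ 0))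
              nlinarith [mul_nonneg this (sub_nonneg.mpr htm)]
            have h2 : 0 ≤ a' * q * (t - t0) * (t - m) :=
              mul_nonneg (mul_nonneg haq (by linarith)) (by linarith)
            linarith [key, hid', h1, h2]
          have hvm : a' * m + b' = m ^ p := by
            apply mul_right_cancel₀ hd'
            linear_combination m * ha'd + hb'd
          have hfin : (a' * t + b') * t ^ (-q) ≤ m ^ p * m ^ (-q) := by
            apply le_of_mul_le_mul_right _ hm
            calc (a' * t + b') * t ^ (-q) * m = (a' * t + b') * (t ^ (-q) * m) := by ring
              _ ≤ (a' * t + b') * (m ^ (-q) * (m + (-q) * (t - m))) :=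
                  mul_le_mul_of_nonneg_left htan hL
              _ = ((a' * t + b') * (m + (-q) * (t - m))) * m ^ (-q) := by ring
              _ ≤ ((a' * m + b') * m) * m ^ (-q) := mul_le_mul_of_nonneg_right hstep hX.le
              _ = (a' * m + b') * m ^ (-q) * m := by ring
              _ = m ^ p * m ^ (-q) * m := by rw [hvm]
          calc (a' * t + b') * t ^ (-q) ≤ m ^ p * m ^ (-q) := hfin
            _ = m ^ (p - q) := by rw [← Real.rpow_add hm, sub_eq_add_neg]
            _ ≤ max (m ^ (p - q)) (M ^ (p - q)) := le_max_left _ _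
        · -- M < t0 : use tangent at M
          have htan : t ^ (-q) * M ≤ M ^ (-q) * (M + (-q) * (t - M)) :=
            tangent_rpow hM ht (by linarith) (by linarith)
          have hX : 0 < M ^ (-q) := Real.rpow_pos_of_pos hM (-q)
          have hid' : a' * (1 - q) * t0 * (t - M) = q * b' * (t - M) := by rw [hid]
          have haq : 0 ≤ a' * q := by
            nlinarith [mul_nonneg (neg_nonneg.mpr ha'.le) (neg_nonneg.mpr hq0)]
          have hstep : (a' * t + b') * (M + (-q) * (t - M)) ≤ (a' * M + b') * M := by
            have key : (a' * M + b') * M - (a' * t + b') * (M + (-q) * (t - M))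
                = a' * (t0 - M) * (t - M) + a' * q * (t - t0) * (t - M)
                  + (q * b' * (t - M) - a' * (1 - q) * t0 * (t - M)) := by
              ring
            have h1 : 0 ≤ a' * (t0 - M) * (t - M) := by
              have h0 := mul_nonneg (neg_nonneg.mpr ha'.le) (by linarith : (0:ℝ) ≤ t0 - M)
              nlinarith [mul_nonneg h0 (neg_nonneg.mpr (by linarith : t - M ≤ 0))]
            have h2 : 0 ≤ a' * q * (t - t0) * (t - M) := by
              have := mul_nonneg haq (mul_nonneg (neg_nonneg.mpr (by linarith : t - t0 ≤ 0))
                (neg_nonneg.mpr (by linarith : t - M ≤ 0)))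
              nlinarith [this]
            linarith [key, hid', h1, h2]
          have hvM : a' * M + b' = M ^ p := by
            apply mul_right_cancel₀ hd'
            linear_combination M * ha'd + hb'd
          have hfin : (a' * t + b') * t ^ (-q) ≤ M ^ p * M ^ (-q) := by
            apply le_of_mul_le_mul_right _ hM
            calc (a' * t + b') * t ^ (-q) * M = (a' * t + b') * (t ^ (-q) * M) := by ring
              _ ≤ (a' * t + b') * (M ^ (-q) * (M + (-q) * (t - M))) :=
                  mul_le_mul_of_nonneg_left htan hL
              _ = ((a' * t + b') * (M + (-q) * (t - M))) * M ^ (-q) := by ring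
              _ ≤ ((a' * M + b') * M) * M ^ (-q) := mul_le_mul_of_nonneg_right hstep hX.le
              _ = (a' * M + b') * M ^ (-q) * M := by ring
              _ = M ^ p * M ^ (-q) * M := by rw [hvM]
          calc (a' * t + b') * t ^ (-q) ≤ M ^ p * M ^ (-q) := hfin
            _ = M ^ (p - q) := by rw [← Real.rpow_add hM, sub_eq_add_neg]
            _ ≤ max (m ^ (p - q)) (M ^ (p - q)) := le_max_right _ _

lemma part1_scalar (m M p : ℝ) (hm : 0 < m) (hmM : m < M) (hp : p ≤ 0) :
    ∀ t ∈ Set.Icc m M, t ^ p ≤ Real.exp (((M - t) / (M - m)) * Real.log (m ^ p) +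
      ((t - m) / (M - m)) * Real.log (M ^ p)) := by
  have hM : 0 < M := hm.trans hmM
  have hd : (0:ℝ) < M - m := by linarith
  rintro t ⟨htm, htM⟩
  have ht : 0 < t := lt_of_lt_of_le hm htm
  have hs1 : 0 ≤ (M - t) / (M - m) := div_nonneg (by linarith) hd.le
  have hs2 : 0 ≤ (t - m) / (M - m) := div_nonneg (by linarith) hd.le
  have hsum : (M - t) / (M - m) + (t - m) / (M - m) = 1 := by
    field_simp; ring
  have hcomb : (M - t) / (M - m) * m + (t - m) / (M - m) * M = t := by
    field_simp; ring
  have hlog : (M - t) / (M - m) * Real.log m + (t - m) / (M - m) * Real.log M ≤ Real.log t := by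
    have h := (strictConcaveOn_log_Ioi.concaveOn).2 (Set.mem_Ioi.mpr hm) (Set.mem_Ioi.mpr hM)
      hs1 hs2 hsum
    simp only [smul_eq_mul] at h
    rwa [hcomb] at h
  rw [Real.rpow_def_of_pos ht, Real.log_rpow hm, Real.log_rpow hM]
  apply Real.exp_le_exp.mpr
  nlinarith [mul_nonneg (neg_nonneg.mpr hp) (sub_nonneg.mpr hlog)]

lemma part2_scalar (m M p : ℝ) (hm : 0 < m) (hmM : m < M) :
    ∀ t ∈ Set.Icc m M, Real.exp (((M - t) / (M - m)) * Real.log (m ^ p) +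
      ((t - m) / (M - m)) * Real.log (M ^ p)) ≤
      ((M - t) / (M - m)) * m ^ p + ((t - m) / (M - m)) * M ^ p := by
  have hM : 0 < M := hm.trans hmM
  have hd : (0:ℝ) < M - m := by linarith
  have hmp : 0 < m ^ p := Real.rpow_pos_of_pos hm p
  have hMp : 0 < M ^ p := Real.rpow_pos_of_pos hM p
  rintro t ⟨htm, htM⟩
  have hs1 : 0 ≤ (M - t) / (M - m) := div_nonneg (by linarith) hd.le
  have hs2 : 0 ≤ (t - m) / (M - m) := div_nonneg (by linarith) hd.le
  have hsum : (M - t) / (M - m) + (t - m) / (M - m) = 1 := by field_simp; ring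
  have h := convexOn_exp.2 (Set.mem_univ (Real.log (m ^ p))) (Set.mem_univ (Real.log (M ^ p)))
    hs1 hs2 hsum
  simp only [smul_eq_mul] at h
  rwa [Real.exp_log hmp, Real.exp_log hMp] at h



section SpectralRadius

variable {A : Type*} [NormedRing A] [NormedAlgebra ℂ A] [CompleteSpace A]

lemma biSup_nnnorm_diff_zero (S : Set ℂ) :
    (⨆ k ∈ S, (‖k‖₊ : ℝ≥0∞)) = ⨆ k ∈ S \ {0}, (‖k‖₊ : ℝ≥0∞) := by
  apply le_antisymm
  · apply iSup₂_le
    intro k hk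
    rcases eq_or_ne k 0 with rfl | hne
    · simp
    · exact le_iSup₂ (f := fun k (_ : k ∈ S \ {0}) => (‖k‖₊ : ℝ≥0∞)) k ⟨hk, hne⟩
  · apply iSup₂_le
    intro k hk
    exact le_iSup₂ (f := fun k (_ : k ∈ S) => (‖k‖₊ : ℝ≥0∞)) k hk.1

lemma spectralRadius_mul_comm (a b : A) :
    spectralRadius ℂ (a * b) = spectralRadius ℂ (b * a) := by
  unfold spectralRadius
  rw [biSup_nnnorm_diff_zero (spectrum ℂ (a * b)),
    biSup_nnnorm_diff_zero (spectrum ℂ (b * a)),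
    spectrum.nonzero_mul_comm]

end SpectralRadius

section LH

variable {A : Type*} [CStarAlgebra A] [Nontrivial A] [PartialOrder A] [StarOrderedRing A]

lemma zero_not_mem_spec {a : A} (hua : IsUnit a) : (0 : ℝ≥0) ∉ spectrum ℝ≥0 a :=
  spectrum.zero_notMem ℝ≥0 hua

/-- The unit associated to `a ^ u` for `a` a positive unit. -/
noncomputable def rpowUnit {a : A} (hua : IsUnit a) (ha : 0 ≤ a) (u : ℝ) : Aˣ where
  val := a ^ u
  inv := a ^ (-u)
  val_inv := CFC.rpow_mul_rpow_neg u (hua.isStrictlyPositive ha)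
  inv_val := CFC.rpow_neg_mul_rpow u (hua.isStrictlyPositive ha)

lemma rpowUnit_coe {a : A} (hua : IsUnit a) (ha : 0 ≤ a) (u : ℝ) :
    ((rpowUnit hua ha u : Aˣ) : A) = a ^ u := rfl

lemma rpowUnit_inv_coe {a : A} (hua : IsUnit a) (ha : 0 ≤ a) (u : ℝ) :
    (((rpowUnit hua ha u)⁻¹ : Aˣ) : A) = a ^ (-u) := rfl

lemma isUnit_rpow {a : A} (hua : IsUnit a) (ha : 0 ≤ a) (u : ℝ) : IsUnit (a ^ u) :=
  ⟨rpowUnit hua ha u, rfl⟩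

lemma le_rpow_iff_norm {a b : A} (ha : 0 ≤ a) (hb : 0 ≤ b) (hua : IsUnit a) (hub : IsUnit b)
    {u : ℝ} (hu : u ≠ 0) :
    a ^ u ≤ b ^ u ↔ ‖a ^ (u / 2) * b ^ (-(u / 2))‖ ≤ 1 := by
  have h := le_iff_norm_sqrt_mul_sqrt_inv (a := a ^ u) (b := rpowUnit hub hb u)
    (CFC.rpow_nonneg) (by rw [rpowUnit_coe]; exact CFC.rpow_nonneg)
  rw [rpowUnit_coe, rpowUnit_inv_coe] at h
  rw [h, CFC.sqrt_rpow hua hu,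
    CFC.sqrt_rpow hub (neg_ne_zero.mpr hu)]
  rw [show -u / 2 = -(u / 2) by ring]

lemma norm_rpow_mul_le_one {a b : A} (ha : 0 ≤ a) (hb : 0 ≤ b) (hua : IsUnit a) (hub : IsUnit b)
    {u : ℝ} (hu : 0 ≤ u) (hle : a ^ u ≤ b ^ u) :
    ‖a ^ (u / 2) * b ^ (-(u / 2))‖ ≤ 1 := by
  rcases eq_or_lt_of_le hu with rfl | hu'
  · norm_num
    rw [CFC.rpow_zero a ha, CFC.rpow_zero b hb, one_mul, norm_one]
  · exact (le_rpow_iff_norm ha hb hua hub (ne_of_gt hu')).mp hle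

lemma lh_midpoint {a b : A} (ha : 0 ≤ a) (hb : 0 ≤ b) (hua : IsUnit a) (hub : IsUnit b)
    {r s : ℝ} (hr : 0 ≤ r) (hs : 0 ≤ s)
    (h1 : a ^ r ≤ b ^ r) (h2 : a ^ s ≤ b ^ s) :
    a ^ ((r + s) / 2) ≤ b ^ ((r + s) / 2) := by
  have hza := hua
  have hzb := hub
  rcases eq_or_lt_of_le (by linarith : (0:ℝ) ≤ (r + s) / 2) with hw0 | hw
  · rw [← hw0, CFC.rpow_zero a ha, CFC.rpow_zero b hb]
  set w := (r + s) / 2 with hw_def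
  rw [le_rpow_iff_norm ha hb hua hub (ne_of_gt hw)]
  set X := a ^ (w / 2) * b ^ (-(w / 2)) with hX_def
  have hsa : ∀ (c : A) (u : ℝ), (0:A) ≤ c → star (c ^ u) = c ^ u := fun c u hc =>
    (IsSelfAdjoint.of_nonneg (CFC.rpow_nonneg)).star_eq
  -- the two norm bounds from the hypotheses
  have hY1 : ‖a ^ (s / 2) * b ^ (-(s / 2))‖ ≤ 1 := norm_rpow_mul_le_one ha hb hua hub hs h2
  have hY2 : ‖b ^ (-(r / 2)) * a ^ (r / 2)‖ ≤ 1 := by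
    have h := norm_rpow_mul_le_one ha hb hua hub hr h1
    calc ‖b ^ (-(r / 2)) * a ^ (r / 2)‖
        = ‖star (a ^ (r / 2) * b ^ (-(r / 2)))‖ := by
          rw [star_mul, hsa a (r/2) ha, hsa b (-(r/2)) hb]
      _ = ‖a ^ (r / 2) * b ^ (-(r / 2))‖ := norm_star _
      _ ≤ 1 := h
  -- identify star X * X
  have hXsX : star X * X = b ^ (-(w / 2)) * (a ^ w * b ^ (-(w / 2))) := by
    rw [hX_def, star_mul, hsa a (w/2) ha, hsa b (-(w/2)) hb]
    have : a ^ (w / 2) * a ^ (w / 2) = a ^ w := by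
      rw [← CFC.rpow_add hza, show w / 2 + w / 2 = w by ring]
    rw [mul_assoc, ← mul_assoc (a ^ (w/2)), this]
  -- spectral radius computation
  have hr1 : spectralRadius ℂ (star X * X)
      = spectralRadius ℂ (a ^ w * b ^ (-w)) := by
    rw [hXsX, spectralRadius_mul_comm]
    congr 1
    rw [mul_assoc, ← CFC.rpow_add hzb, show -(w / 2) + -(w / 2) = -w by ring]
  have hr2 : spectralRadius ℂ (a ^ w * b ^ (-w))
      = spectralRadius ℂ ((a ^ (s / 2) * b ^ (-(s / 2))) * (b ^ (-(r / 2)) * a ^ (r / 2))) := by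
    have ha_split : a ^ w = a ^ (r / 2) * a ^ (s / 2) := by
      rw [← CFC.rpow_add hza]; congr 1; rw [hw_def]; ring
    have hb_split : b ^ (-w) = b ^ (-(s / 2)) * b ^ (-(r / 2)) := by
      rw [← CFC.rpow_add hzb]; congr 1; rw [hw_def]; ring
    rw [ha_split, hb_split, mul_assoc, spectralRadius_mul_comm]
    congr 1
    simp only [mul_assoc]
  have hr3 : spectralRadius ℂ ((a ^ (s / 2) * b ^ (-(s / 2))) * (b ^ (-(r / 2)) * a ^ (r / 2)))
      ≤ 1 := by
    refine le_trans (spectrum.spectralRadius_le_nnnorm (𝕜 := ℂ) _) ?_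
    have hn : ‖(a ^ (s / 2) * b ^ (-(s / 2))) * (b ^ (-(r / 2)) * a ^ (r / 2))‖₊ ≤ 1 := by
      refine le_trans (nnnorm_mul_le _ _) (mul_le_one' ?_ ?_)
      · exact_mod_cast hY1
      · exact_mod_cast hY2
    exact_mod_cast hn
  have hsaXX : IsSelfAdjoint (star X * X) := IsSelfAdjoint.star_mul_self X
  have hkey : (‖star X * X‖₊ : ℝ≥0∞) ≤ 1 := by
    rw [← hsaXX.spectralRadius_eq_nnnorm, hr1, hr2]
    exact hr3
  have hkey' : ‖star X * X‖ ≤ 1 := by exact_mod_cast hkey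
  have hnorm : ‖X‖ * ‖X‖ ≤ 1 := by
    rw [← CStarRing.norm_star_mul_self]
    exact hkey'
  nlinarith [norm_nonneg X]

end LH

section LH2

variable {A : Type*} [CStarAlgebra A] [Nontrivial A] [PartialOrder A] [StarOrderedRing A]

lemma lh_dyadic {a b : A} (ha : 0 ≤ a) (hb : 0 ≤ b) (hua : IsUnit a) (hub : IsUnit b)
    (hab : a ≤ b) :
    ∀ n k : ℕ, k ≤ 2 ^ n → a ^ ((k : ℝ) / (2:ℝ) ^ n) ≤ b ^ ((k : ℝ) / (2:ℝ) ^ n) := by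
  intro n
  induction n with
  | zero =>
    intro k hk
    interval_cases k
    · simp only [Nat.cast_zero, pow_zero, zero_div]
      rw [CFC.rpow_zero a ha, CFC.rpow_zero b hb]
    · simp only [Nat.cast_one, pow_zero, div_one]
      rw [CFC.rpow_one a ha, CFC.rpow_one b hb]
      exact hab
  | succ n ih =>
    intro k hk
    have h2n : ((2:ℝ)) ^ n ≠ 0 := by positivity
    have hpow : (2:ℕ) ^ (n + 1) = 2 ^ n * 2 := pow_succ 2 n
    rcases Nat.even_or_odd k with ⟨j, hj⟩ | ⟨j, hj⟩
    · have hj2 : j ≤ 2 ^ n := by omega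
      have hexp : ((k : ℝ)) / (2:ℝ) ^ (n+1) = (j : ℝ) / (2:ℝ) ^ n := by
        subst hj; push_cast; rw [pow_succ]; field_simp; ring
      rw [hexp]
      exact ih j hj2
    · have hj1 : j ≤ 2 ^ n := by omega
      have hj2 : j + 1 ≤ 2 ^ n := by omega
      have ih1 := ih j hj1
      have ih2 := ih (j + 1) hj2
      rw [Nat.cast_add, Nat.cast_one] at ih2
      have hexp : ((k : ℝ)) / (2:ℝ) ^ (n+1)
          = ((j : ℝ) / (2:ℝ) ^ n + ((j : ℝ) + 1) / (2:ℝ) ^ n) / 2 := by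
        subst hj; push_cast; rw [pow_succ]; field_simp; ring
      rw [hexp]
      exact lh_midpoint ha hb hua hub (by positivity) (by positivity) ih1 ih2

lemma exp_lip {u v L : ℝ} (hu : |u| ≤ L) (hv : |v| ≤ L) :
    |Real.exp u - Real.exp v| ≤ Real.exp L * |u - v| := by
  wlog h : v ≤ u generalizing u v
  · have := this hv hu (le_of_not_ge h)
    rwa [abs_sub_comm, abs_sub_comm v u] at this
  · have h1 : Real.exp v ≤ Real.exp u := Real.exp_le_exp.mpr h
    rw [_root_.abs_of_nonneg (by linarith), _root_.abs_of_nonneg (by linarith)]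
    have h2 : Real.exp u ≤ Real.exp L := Real.exp_le_exp.mpr (le_trans (le_abs_self u) hu)
    have h3 := Real.add_one_le_exp (v - u)
    have h4 : Real.exp v = Real.exp u * Real.exp (v - u) := by
      rw [← Real.exp_add]; ring_nf
    have h5 : Real.exp (v - u) ≤ 1 := Real.exp_le_one_iff.mpr (by linarith)
    nlinarith [Real.exp_pos u, Real.exp_pos (v - u), Real.exp_pos L]

lemma rpow_exponent_lip {t x y L : ℝ} (ht : 0 < t) (hlog : |Real.log t| ≤ L)
    (hx : |x| ≤ 1) (hy : |y| ≤ 1) :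
    |t ^ x - t ^ y| ≤ Real.exp L * (L * |x - y|) := by
  rw [Real.rpow_def_of_pos ht, Real.rpow_def_of_pos ht]
  have hL : 0 ≤ L := le_trans (abs_nonneg _) hlog
  have h1 : |Real.log t * x| ≤ L := by
    rw [abs_mul]
    calc |Real.log t| * |x| ≤ L * 1 := mul_le_mul hlog hx (abs_nonneg _) hL
      _ = L := mul_one L
  have h2 : |Real.log t * y| ≤ L := by
    rw [abs_mul]
    calc |Real.log t| * |y| ≤ L * 1 := mul_le_mul hlog hy (abs_nonneg _) hL
      _ = L := mul_one L
  calc |Real.exp (Real.log t * x) - Real.exp (Real.log t * y)|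
      ≤ Real.exp L * |Real.log t * x - Real.log t * y| := exp_lip h1 h2
    _ = Real.exp L * (|Real.log t| * |x - y|) := by rw [← mul_sub, abs_mul]
    _ ≤ Real.exp L * (L * |x - y|) := by
        apply mul_le_mul_of_nonneg_left _ (Real.exp_pos L).le
        exact mul_le_mul_of_nonneg_right hlog (abs_nonneg _)

lemma rpow_eq_real_cfc {a : A} (ha : 0 ≤ a) (y : ℝ) :
    a ^ y = cfc (fun t : ℝ => t ^ y) a := by
  rw [CFC.rpow_def, cfc_nnreal_eq_real _ a ha]
  refine cfc_congr fun x hx => ?_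
  have hx0 : 0 ≤ x := spectrum_nonneg_of_nonneg ha hx
  rw [NNReal.coe_rpow, Real.coe_toNNReal x hx0]

lemma spec_pos {a : A} (ha : 0 ≤ a) (hua : IsUnit a) : ∀ x ∈ spectrum ℝ a, 0 < x := by
  intro x hx
  refine lt_of_le_of_ne (spectrum_nonneg_of_nonneg ha hx) fun h => ?_
  rw [← h] at hx
  exact spectrum.zero_notMem ℝ hua hx

lemma rpow_continuousOn {S : Set ℝ} (hS : ∀ x ∈ S, 0 < x) (y : ℝ) :
    ContinuousOn (fun t : ℝ => t ^ y) S := fun t ht =>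
  (Real.continuousAt_rpow_const t y (Or.inl (ne_of_gt (hS t ht)))).continuousWithinAt

lemma spec_bounds {a : A} (ha : 0 ≤ a) (hua : IsUnit a) :
    ∃ ε R : ℝ, 0 < ε ∧ ∀ x ∈ spectrum ℝ a, ε ≤ x ∧ x ≤ R := by
  have hinv_ne : (↑hua.unit⁻¹ : A) ≠ 0 := hua.unit⁻¹.ne_zero
  have hN : 0 < ‖(↑hua.unit⁻¹ : A)‖ := norm_pos_iff.mpr hinv_ne
  refine ⟨‖(↑hua.unit⁻¹ : A)‖⁻¹, ‖a‖, inv_pos.mpr hN, fun x hx => ⟨?_, ?_⟩⟩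
  · have hx0 : 0 < x := spec_pos ha hua x hx
    have hxu : ((Units.mk0 x hx0.ne' : ℝˣ) : ℝ) ∈ spectrum ℝ (↑hua.unit : A) := by
      rw [hua.unit_spec]
      exact hx
    have hxinv := spectrum.inv_mem_iff.mp hxu
    have hle := spectrum.norm_le_norm_of_mem hxinv
    have hle' : ‖(x⁻¹ : ℝ)‖ ≤ ‖(↑hua.unit⁻¹ : A)‖ := hle
    rw [Real.norm_eq_abs, _root_.abs_of_nonneg (by positivity)] at hle'
    have h1 : x * x⁻¹ = 1 := mul_inv_cancel₀ hx0.ne'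
    have h2 : ‖(↑hua.unit⁻¹ : A)‖⁻¹ * ‖(↑hua.unit⁻¹ : A)‖ = 1 := inv_mul_cancel₀ hN.ne'
    nlinarith [hle']
  · exact (Real.le_norm_self x).trans (spectrum.norm_le_norm_of_mem hx)

lemma rpow_tendsto {a : A} (ha : 0 ≤ a) (hua : IsUnit a) (u : ℕ → ℝ) (r : ℝ)
    (hu0 : ∀ n, 0 ≤ u n) (hu1 : ∀ n, u n ≤ 1) (hr0 : 0 ≤ r) (hr1 : r ≤ 1)
    (hlim : Filter.Tendsto u Filter.atTop (nhds r)) :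
    Filter.Tendsto (fun n => a ^ (u n)) Filter.atTop (nhds (a ^ r)) := by
  obtain ⟨ε, R, hε, hεR⟩ := spec_bounds ha hua
  set L := |Real.log ε| + |Real.log R| with hL_def
  have hL0 : 0 ≤ L := by positivity
  have hlog : ∀ x ∈ spectrum ℝ a, |Real.log x| ≤ L := by
    intro x hx
    obtain ⟨h1, h2⟩ := hεR x hx
    have hx0 : 0 < x := lt_of_lt_of_le hε h1
    have hl1 : Real.log ε ≤ Real.log x := Real.log_le_log hε h1
    have hl2 : Real.log x ≤ Real.log R := Real.log_le_log hx0 h2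
    rw [abs_le]
    constructor
    · linarith [neg_abs_le (Real.log ε), abs_nonneg (Real.log R)]
    · linarith [le_abs_self (Real.log R), abs_nonneg (Real.log ε)]
  have hbound : ∀ n, ‖a ^ (u n) - a ^ r‖ ≤ (Real.exp L * L) * |u n - r| := by
    intro n
    have hc1 : ContinuousOn (fun t : ℝ => t ^ (u n)) (spectrum ℝ a) :=
      rpow_continuousOn (spec_pos ha hua) _
    have hc2 : ContinuousOn (fun t : ℝ => t ^ r) (spectrum ℝ a) :=
      rpow_continuousOn (spec_pos ha hua) _
    rw [rpow_eq_real_cfc ha, rpow_eq_real_cfc ha,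
      ← cfc_sub (fun t : ℝ => t ^ (u n)) (fun t : ℝ => t ^ r) a hc1 hc2]
    apply norm_cfc_le (by positivity)
    intro x hx
    have h := rpow_exponent_lip (spec_pos ha hua x hx) (hlog x hx)
      (abs_le.mpr ⟨by linarith [hu0 n], hu1 n⟩) (abs_le.mpr ⟨by linarith, hr1⟩)
    rw [Real.norm_eq_abs]
    calc |x ^ (u n) - x ^ r| ≤ Real.exp L * (L * |u n - r|) := h
      _ = (Real.exp L * L) * |u n - r| := by ring
  have h0 : Filter.Tendsto (fun n => (Real.exp L * L) * |u n - r|) Filter.atTop (nhds 0) := by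
    have h1 := (hlim.sub (tendsto_const_nhds (x := r))).abs
    simp only [sub_self, _root_.abs_zero] at h1
    have h2 := h1.const_mul (Real.exp L * L)
    simpa using h2
  have := squeeze_zero_norm hbound h0
  exact tendsto_sub_nhds_zero_iff.mp this

theorem loewner_heinz {a b : A} (ha : 0 ≤ a) (hb : 0 ≤ b) (hua : IsUnit a) (hub : IsUnit b)
    (hab : a ≤ b) {r : ℝ} (hr0 : 0 ≤ r) (hr1 : r ≤ 1) : a ^ r ≤ b ^ r := by
  have dy := lh_dyadic ha hb hua hub hab
  set u : ℕ → ℝ := fun n => (⌊r * 2 ^ n⌋₊ : ℝ) / (2:ℝ) ^ n with hu_def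
  have h2n : ∀ n : ℕ, (0:ℝ) < 2 ^ n := fun n => by positivity
  have hkle : ∀ n, ⌊r * 2 ^ n⌋₊ ≤ 2 ^ n := by
    intro n
    have h1 : r * 2 ^ n ≤ ((2 ^ n : ℕ) : ℝ) := by
      push_cast
      nlinarith [h2n n]
    calc ⌊r * 2 ^ n⌋₊ ≤ ⌊((2 ^ n : ℕ) : ℝ)⌋₊ := Nat.floor_mono h1
      _ = 2 ^ n := Nat.floor_natCast _
  have hu0 : ∀ n, 0 ≤ u n := fun n => div_nonneg (Nat.cast_nonneg _) (h2n n).le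
  have hu1 : ∀ n, u n ≤ 1 := by
    intro n
    rw [hu_def, div_le_one (h2n n)]
    have := hkle n
    push_cast
    exact_mod_cast Nat.cast_le.mpr this
  have hup : ∀ n, u n ≤ r := by
    intro n
    rw [hu_def, div_le_iff₀ (h2n n)]
    exact Nat.floor_le (by positivity : (0:ℝ) ≤ r * 2 ^ n)
  have hlow : ∀ n, r - (1/2:ℝ) ^ n ≤ u n := by
    intro n
    have hfl := Nat.sub_one_lt_floor (r * 2 ^ n)
    rw [hu_def, le_div_iff₀ (h2n n)]
    have hhalf : (1/2:ℝ) ^ n * 2 ^ n = 1 := by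
      rw [← mul_pow]; norm_num
    nlinarith [hfl]
  have hulim : Filter.Tendsto u Filter.atTop (nhds r) := by
    have hpow : Filter.Tendsto (fun n : ℕ => (1/2:ℝ) ^ n) Filter.atTop (nhds 0) :=
      tendsto_pow_atTop_nhds_zero_of_lt_one (by norm_num) (by norm_num)
    have hlower : Filter.Tendsto (fun n : ℕ => r - (1/2:ℝ) ^ n) Filter.atTop (nhds r) := by
      simpa using (tendsto_const_nhds (x := r)).sub hpow
    exact tendsto_of_tendsto_of_tendsto_of_le_of_le hlower tendsto_const_nhds hlow hup
  have hle : ∀ n, a ^ (u n) ≤ b ^ (u n) := fun n => dy n _ (hkle n)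
  exact le_of_tendsto_of_tendsto' (rpow_tendsto ha hua u r hu0 hu1 hr0 hr1 hulim)
    (rpow_tendsto hb hub u r hu0 hu1 hr0 hr1 hulim) hle

lemma rpow_antitone_neg {a b : A} (ha : 0 ≤ a) (hb : 0 ≤ b) (hua : IsUnit a) (hub : IsUnit b)
    (hab : a ≤ b) {q : ℝ} (hq1 : -1 ≤ q) (hq0 : q ≤ 0) : b ^ q ≤ a ^ q := by
  rcases eq_or_lt_of_le hq0 with rfl | hq
  · rw [CFC.rpow_zero a ha, CFC.rpow_zero b hb]
  · have h1 : a ^ (-q) ≤ b ^ (-q) :=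
      loewner_heinz ha hb hua hub hab (by linarith) (by linarith)
    have hinv := CStarAlgebra.rpow_neg_one_le_rpow_neg_one h1
      ((isUnit_rpow hua ha (-q)).isStrictlyPositive CFC.rpow_nonneg)
    rw [CFC.rpow_rpow a (-q) (-1) (neg_ne_zero.mpr hq.ne) (hua.isStrictlyPositive ha),
      CFC.rpow_rpow b (-q) (-1) (neg_ne_zero.mpr hq.ne) (hub.isStrictlyPositive hb),
      show (-q) * (-1:ℝ) = q by ring] at hinv
    exact hinv

lemma smul_nonneg_cstar {z : A} (hz : 0 ≤ z) {c : ℝ} (hc : 0 ≤ c) : 0 ≤ c • z := by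
  rw [← cfc_const_mul_id c z (IsSelfAdjoint.of_nonneg hz)]
  apply cfc_nonneg
  intro x hx
  exact mul_nonneg hc (spectrum_nonneg_of_nonneg hz hx)

lemma smul_mono_cstar {x y : A} (h : x ≤ y) {c : ℝ} (hc : 0 ≤ c) : c • x ≤ c • y := by
  have h0 := smul_nonneg_cstar (sub_nonneg.mpr h) hc
  rw [smul_sub] at h0
  exact sub_nonneg.mp h0

end LH2


/-- Main inequality: `B^p ≤ exp(...) ≤ K(m,M,p,q) A^q` for `p ≤ 0`, `-1 ≤ q ≤ 0`. -/
theorem stmt_5 {H : Type*} [NormedAddCommGroup H] [InnerProductSpace ℂ H] [CompleteSpace H]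
    (A B : H →L[ℂ] H) (hA0 : 0 ≤ A) (hAu : IsUnit A) (hB0 : 0 ≤ B) (hBu : IsUnit B)
    (m M : ℝ) (hm : 0 < m) (hmM : m < M)
    (hAB : A ≤ B) (hmB : m • (1 : H →L[ℂ] H) ≤ B) (hBM : B ≤ M • (1 : H →L[ℂ] H))
    (p q : ℝ) (hp : p ≤ 0) (hq1 : -1 ≤ q) (hq0 : q ≤ 0) (K : ℝ)
    (hK : K =
      if q * (m * M ^ p - M * m ^ p) / ((q - 1) * (M ^ p - m ^ p)) ∈ Set.Icc m M then
        (m * M ^ p - M * m ^ p) / ((q - 1) * (M - m)) *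
          (((q - 1) / q) * (M ^ p - m ^ p) / (m * M ^ p - M * m ^ p)) ^ q
      else
        max (m ^ (p - q)) (M ^ (p - q))) :
    cfc (fun t : ℝ => t ^ p) B ≤
      cfc (fun t : ℝ => Real.exp (((M - t) / (M - m)) * Real.log (m ^ p) +
        ((t - m) / (M - m)) * Real.log (M ^ p))) B ∧
    cfc (fun t : ℝ => Real.exp (((M - t) / (M - m)) * Real.log (m ^ p) +
        ((t - m) / (M - m)) * Real.log (M ^ p))) B ≤
      K • cfc (fun t : ℝ => t ^ q) A := by
  obtain (hsub | hnt) := subsingleton_or_nontrivial (H →L[ℂ] H)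
  · exact ⟨le_of_eq (Subsingleton.elim _ _), le_of_eq (Subsingleton.elim _ _)⟩
  have hBsa : IsSelfAdjoint B := .of_nonneg hB0
  have hd' : (M - m) ≠ 0 := by intro h; nlinarith
  -- spectrum of B is contained in [m, M]
  have hσB : ∀ x ∈ spectrum ℝ B, x ∈ Set.Icc m M := by
    intro x hx
    constructor
    · have h1 : algebraMap ℝ (H →L[ℂ] H) m ≤ B := by
        rwa [Algebra.algebraMap_eq_smul_one]
      exact (algebraMap_le_iff_le_spectrum (a := B) hBsa).mp h1 x hx
    · have h2 : B ≤ algebraMap ℝ (H →L[ℂ] H) M := by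
        rwa [Algebra.algebraMap_eq_smul_one]
      exact (le_algebraMap_iff_spectrum_le (a := B) hBsa).mp h2 x hx
  have hσBpos : ∀ x ∈ spectrum ℝ B, (0:ℝ) < x := fun x hx => lt_of_lt_of_le hm (hσB x hx).1
  have hcont_p : ContinuousOn (fun t : ℝ => t ^ p) (spectrum ℝ B) := rpow_continuousOn hσBpos p
  have hcont_q : ContinuousOn (fun t : ℝ => t ^ q) (spectrum ℝ B) := rpow_continuousOn hσBpos q
  have hcont_exp : Continuous (fun t : ℝ => Real.exp (((M - t) / (M - m)) * Real.log (m ^ p) +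
      ((t - m) / (M - m)) * Real.log (M ^ p))) := by fun_prop
  -- K is nonnegative
  have hKm := scalar_main m M p q K hm hmM hp hq1 hq0 hK m ⟨le_refl m, hmM.le⟩
  have hval_m : ((M - m) / (M - m)) * m ^ p + ((m - m) / (M - m)) * M ^ p = m ^ p := by
    rw [div_self hd', sub_self, zero_div]; ring
  have hK0 : 0 ≤ K := by
    rw [hval_m] at hKm
    nlinarith [Real.rpow_pos_of_pos hm p, Real.rpow_pos_of_pos hm q]
  -- first inequality
  have goal1 : cfc (fun t : ℝ => t ^ p) B ≤
      cfc (fun t : ℝ => Real.exp (((M - t) / (M - m)) * Real.log (m ^ p) +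
        ((t - m) / (M - m)) * Real.log (M ^ p))) B :=
    cfc_mono (fun x hx => part1_scalar m M p hm hmM hp x (hσB x hx)) hcont_p
      hcont_exp.continuousOn
  refine ⟨goal1, ?_⟩
  -- second inequality
  have step1 : cfc (fun t : ℝ => Real.exp (((M - t) / (M - m)) * Real.log (m ^ p) +
      ((t - m) / (M - m)) * Real.log (M ^ p))) B ≤ cfc (fun t : ℝ => K * t ^ q) B :=
    cfc_mono (fun x hx => le_trans (part2_scalar m M p hm hmM x (hσB x hx))
        (scalar_main m M p q K hm hmM hp hq1 hq0 hK x (hσB x hx)))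
      hcont_exp.continuousOn (continuousOn_const.mul hcont_q)
  have step2 : cfc (fun t : ℝ => K * t ^ q) B = K • cfc (fun t : ℝ => t ^ q) B :=
    cfc_const_mul K (fun t : ℝ => t ^ q) B hcont_q
  have step3 : cfc (fun t : ℝ => t ^ q) B ≤ cfc (fun t : ℝ => t ^ q) A := by
    rw [← rpow_eq_real_cfc hB0 q, ← rpow_eq_real_cfc hA0 q]
    exact rpow_antitone_neg hA0 hB0 hAu hBu hAB hq1 hq0
  calc cfc (fun t : ℝ => Real.exp (((M - t) / (M - m)) * Real.log (m ^ p) +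
      ((t - m) / (M - m)) * Real.log (M ^ p))) B
      ≤ cfc (fun t : ℝ => K * t ^ q) B := step1
    _ = K • cfc (fun t : ℝ => t ^ q) B := step2
    _ ≤ K • cfc (fun t : ℝ => t ^ q) A := smul_mono_cstar step3 hK0
end

section
/- Let A, B be strictly positive bounded operators on a complex Hilbert space with A ≤ B and m·1 ≤ B ≤ M·1 for scalars 0 < m < M. Then for p ≤ 0, q ≤ 0: B^p ≤ exp( ((M·1 - B)/(M-m))·ln m^p + ((B - m·1)/(M-m))·ln M^p ) ≤ C(m,M,p,q)·1 + A^q, where C(m,M,p,q) = (M m^p - m M^p)/(M-m) + (q-1)·((M^p - m^p)/(q(M-m)))^(q/(q-1)) when m ≤ ((M^p - m^p)/(q(M-m)))^(1/(q-1)) ≤ M, and C(m,M,p,q) = max{ M^p - M^q, m^p - m^q } otherwise. -/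
set_option synthInstance.maxHeartbeats 1000000
set_option maxHeartbeats 1000000
open Real Set

private lemma bern_aux {q u : ℝ} (hq : q ≤ 0) (hu : 0 < u) : 1 + q * (u - 1) ≤ u ^ q := by
  have h1 : Real.log u ≤ u - 1 := Real.log_le_sub_one_of_pos hu
  have h2 : q * (u - 1) ≤ q * Real.log u := mul_le_mul_of_nonpos_left h1 hq
  have h3 : q * Real.log u + 1 ≤ Real.exp (q * Real.log u) := Real.add_one_le_exp _
  rw [Real.rpow_def_of_pos hu]
  rw [mul_comm (Real.log u) q]
  linarith

private lemma tangent_aux {q s t : ℝ} (hq : q ≤ 0) (hs : 0 < s) (ht : 0 < t) :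
    s ^ q + q * s ^ (q - 1) * (t - s) ≤ t ^ q := by
  have hu := bern_aux hq (div_pos ht hs)
  have h1 : (t / s) ^ q = t ^ q / s ^ q := Real.div_rpow ht.le hs.le q
  have hsq : 0 < s ^ q := Real.rpow_pos_of_pos hs q
  have h2 : s ^ (q - 1) = s ^ q / s := Real.rpow_sub_one hs.ne' q
  rw [h1] at hu
  have h3 := mul_le_mul_of_nonneg_left hu hsq.le
  have h4 : s ^ q * (t ^ q / s ^ q) = t ^ q := by field_simp
  have h5 : s ^ q * (1 + q * (t / s - 1)) = s ^ q + q * (s ^ q / s) * (t - s) := by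
    field_simp
  rw [h4, h5] at h3
  rw [h2]
  linarith

private lemma affine_aux {u v m M t : ℝ} (h1 : 0 ≤ u + v * m) (h2 : 0 ≤ u + v * M)
    (ht1 : m ≤ t) (ht2 : t ≤ M) : 0 ≤ u + v * t := by
  rcases le_or_gt 0 v with hv | hv
  · nlinarith
  · nlinarith

private lemma op_step {H : Type*} [NormedAddCommGroup H] [InnerProductSpace ℂ H]
    [CompleteSpace H] (A B : H →L[ℂ] H) (hA0 : 0 ≤ A) (hB0 : 0 ≤ B)
    {m M : ℝ} (hm : 0 < m) (hmM : m < M) (hAB : A ≤ B)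
    (hmB : m • (1 : H →L[ℂ] H) ≤ B) (hBM : B ≤ M • (1 : H →L[ℂ] H)) (hAu : IsUnit A)
    (F : ℝ → ℝ) (hF : Continuous F) (q : ℝ) (C α β : ℝ) (hβ : β ≤ 0)
    (h2 : ∀ t ∈ Set.Icc m M, F t ≤ α + β * t)
    (h3 : ∀ t ∈ Set.Ioc 0 M, α + β * t ≤ C + t ^ q) :
    cfc F B ≤ C • (1 : H →L[ℂ] H) + cfc (fun t : ℝ => t ^ q) A := by
  have hBsa : IsSelfAdjoint B := hB0.isSelfAdjoint
  have hAsa : IsSelfAdjoint A := hA0.isSelfAdjoint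
  have specB : spectrum ℝ B ⊆ Set.Icc m M := by
    intro x hx
    constructor
    · exact algebraMap_le_iff_le_spectrum (R := ℝ) (a := B) hBsa |>.mp
        (by rwa [Algebra.algebraMap_eq_smul_one]) x hx
    · exact le_algebraMap_iff_spectrum_le (R := ℝ) (a := B) hBsa |>.mp
        (by rwa [Algebra.algebraMap_eq_smul_one]) x hx
  have specA : spectrum ℝ A ⊆ Set.Ioc 0 M := by
    intro x hx
    constructor
    · have h0 : (0:ℝ) ≤ x := spectrum_nonneg_of_nonneg hA0 hx
      rcases h0.eq_or_lt with h | h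
      · exact absurd (h ▸ hx) (by simpa [spectrum.zero_mem_iff] using hAu)
      · exact h
    · exact le_algebraMap_iff_spectrum_le (R := ℝ) (a := A) hAsa |>.mp
        (by rw [Algebra.algebraMap_eq_smul_one]; exact hAB.trans hBM) x hx
  have hq_cont : ContinuousOn (fun t : ℝ => t ^ q) (spectrum ℝ A) := fun x hx =>
    (Real.continuousAt_rpow_const x q (Or.inl (specA hx).1.ne')).continuousWithinAt
  have affine_eq : ∀ (T : H →L[ℂ] H), 0 ≤ T →
      cfc (fun t : ℝ => α + β * t) T = α • 1 + β • T := by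
    intro T hT
    have hTsa : IsSelfAdjoint T := hT.isSelfAdjoint
    have h1 : cfc (fun t : ℝ => α + β * t) T
        = cfc (fun _ : ℝ => α) T + cfc (fun t : ℝ => β * t) T :=
      cfc_add T _ _ (by fun_prop) (by fun_prop)
    rw [h1, cfc_const α T, cfc_const_mul_id β T, Algebra.algebraMap_eq_smul_one]
  have hBA : β • B ≤ β • A := by
    have hd : β • (B - A) ≤ 0 := by
      rw [← cfc_smul_id (R := ℝ) β (B - A) (by exact (hBsa.sub hAsa))]
      calc cfc (fun t : ℝ => β • t) (B - A) ≤ cfc (fun _ : ℝ => (0:ℝ)) (B - A) := by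
            apply cfc_mono (fun x hx => smul_nonpos_of_nonpos_of_nonneg hβ
              (spectrum_nonneg_of_nonneg (sub_nonneg.mpr hAB) hx)) (by fun_prop) (by fun_prop)
        _ = 0 := by simp
    rw [show β • B = β • (B - A) + β • A by rw [smul_sub]; abel]
    calc β • (B - A) + β • A ≤ 0 + β • A := add_le_add_left hd (β • A)
      _ = β • A := zero_add _
  calc cfc F B ≤ cfc (fun t : ℝ => α + β * t) B := by
        apply cfc_mono (fun x hx => h2 x (specB hx)) (hF.continuousOn) (by fun_prop)
    _ = α • 1 + β • B := affine_eq B hB0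
    _ ≤ α • 1 + β • A := add_le_add_right hBA _
    _ = cfc (fun t : ℝ => α + β * t) A := (affine_eq A hA0).symm
    _ ≤ cfc (fun t : ℝ => C + t ^ q) A := by
        apply cfc_mono (fun x hx => h3 x (specA hx)) (by fun_prop) (continuousOn_const.add hq_cont)
    _ = C • (1 : H →L[ℂ] H) + cfc (fun t : ℝ => t ^ q) A := by
        rw [cfc_add A _ _ continuousOn_const hq_cont, cfc_const C A,
          Algebra.algebraMap_eq_smul_one]



/-- Difference-type bound: `B^p ≤ exp(...) ≤ C(m,M,p,q)·1 + A^q` for `p, q ≤ 0`. -/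
theorem stmt_9 {H : Type*} [NormedAddCommGroup H] [InnerProductSpace ℂ H] [CompleteSpace H]
    (A B : H →L[ℂ] H) (hA0 : 0 ≤ A) (hAu : IsUnit A) (hB0 : 0 ≤ B) (hBu : IsUnit B)
    (m M : ℝ) (hm : 0 < m) (hmM : m < M)
    (hAB : A ≤ B) (hmB : m • (1 : H →L[ℂ] H) ≤ B) (hBM : B ≤ M • (1 : H →L[ℂ] H))
    (p q : ℝ) (hp : p ≤ 0) (hq : q ≤ 0) (C : ℝ)
    (hC : C =
      if ((M ^ p - m ^ p) / (q * (M - m))) ^ (1 / (q - 1)) ∈ Set.Icc m M then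
        (M * m ^ p - m * M ^ p) / (M - m) +
          (q - 1) * ((M ^ p - m ^ p) / (q * (M - m))) ^ (q / (q - 1))
      else
        max (M ^ p - M ^ q) (m ^ p - m ^ q)) :
    cfc (fun t : ℝ => t ^ p) B ≤
      cfc (fun t : ℝ => Real.exp (((M - t) / (M - m)) * Real.log (m ^ p) +
        ((t - m) / (M - m)) * Real.log (M ^ p))) B ∧
    cfc (fun t : ℝ => Real.exp (((M - t) / (M - m)) * Real.log (m ^ p) +
        ((t - m) / (M - m)) * Real.log (M ^ p))) B ≤
      C • (1 : H →L[ℂ] H) + cfc (fun t : ℝ => t ^ q) A := by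
  have hBsa : IsSelfAdjoint B := hB0.isSelfAdjoint
  have hM0 : (0:ℝ) < M := hm.trans hmM
  have hMm : (0:ℝ) < M - m := by linarith
  have hmp : (0:ℝ) < m ^ p := Real.rpow_pos_of_pos hm p
  have hMp : (0:ℝ) < M ^ p := Real.rpow_pos_of_pos hM0 p
  have hpm : M ^ p ≤ m ^ p := Real.rpow_le_rpow_of_nonpos hm hmM.le hp
  set F : ℝ → ℝ := fun t => Real.exp (((M - t) / (M - m)) * Real.log (m ^ p) +
    ((t - m) / (M - m)) * Real.log (M ^ p)) with hF_def
  have hFcont : Continuous F := by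
    apply Real.continuous_exp.comp
    exact (((continuous_const.sub continuous_id).div_const _).mul continuous_const).add
      (((continuous_id.sub continuous_const).div_const _).mul continuous_const)
  -- weights
  have specB : spectrum ℝ B ⊆ Set.Icc m M := by
    intro x hx
    constructor
    · exact algebraMap_le_iff_le_spectrum (R := ℝ) (a := B) hBsa |>.mp
        (by rwa [Algebra.algebraMap_eq_smul_one]) x hx
    · exact le_algebraMap_iff_spectrum_le (R := ℝ) (a := B) hBsa |>.mp
        (by rwa [Algebra.algebraMap_eq_smul_one]) x hx
  set a₀ : ℝ := (M * m ^ p - m * M ^ p) / (M - m) with ha₀_def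
  set b₀ : ℝ := (M ^ p - m ^ p) / (M - m) with hb₀_def
  have hab_m : a₀ + b₀ * m = m ^ p := by rw [ha₀_def, hb₀_def]; field_simp; ring
  have hab_M : a₀ + b₀ * M = M ^ p := by rw [ha₀_def, hb₀_def]; field_simp; ring
  have hb₀_np : b₀ ≤ 0 := div_nonpos_iff.mpr (Or.inr ⟨by linarith, hMm.le⟩)
  -- F1 : pointwise t^p ≤ F t on [m, M]
  have hF1 : ∀ t ∈ Set.Icc m M, t ^ p ≤ F t := by
    rintro t ⟨ht1, ht2⟩
    have ht0 : 0 < t := hm.trans_le ht1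
    have hlam : 0 ≤ (M - t) / (M - m) := div_nonneg (by linarith) hMm.le
    have hmu : 0 ≤ (t - m) / (M - m) := div_nonneg (by linarith) hMm.le
    have hsum : (M - t) / (M - m) + (t - m) / (M - m) = 1 := by field_simp; ring
    have hcomb : ((M - t) / (M - m)) • m + ((t - m) / (M - m)) • M = t := by
      simp only [smul_eq_mul]; field_simp; ring
    have hlog := (strictConcaveOn_log_Ioi.concaveOn).2 (Set.mem_Ioi.mpr hm)
      (Set.mem_Ioi.mpr hM0) hlam hmu hsum
    rw [hcomb] at hlog
    simp only [smul_eq_mul] at hlog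
    show t ^ p ≤ Real.exp _
    rw [Real.rpow_def_of_pos ht0, Real.log_rpow hm, Real.log_rpow hM0]
    apply Real.exp_le_exp.mpr
    have h6 := mul_le_mul_of_nonpos_left hlog hp
    nlinarith [h6]
  -- F2 : pointwise F t ≤ a₀ + b₀ t on [m, M]
  have hF2 : ∀ t ∈ Set.Icc m M, F t ≤ a₀ + b₀ * t := by
    rintro t ⟨ht1, ht2⟩
    have hlam : 0 ≤ (M - t) / (M - m) := div_nonneg (by linarith) hMm.le
    have hmu : 0 ≤ (t - m) / (M - m) := div_nonneg (by linarith) hMm.le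
    have hsum : (M - t) / (M - m) + (t - m) / (M - m) = 1 := by field_simp; ring
    have hconv := convexOn_exp.2 (Set.mem_univ (Real.log (m ^ p)))
      (Set.mem_univ (Real.log (M ^ p))) hlam hmu hsum
    simp only [smul_eq_mul, Real.exp_log hmp, Real.exp_log hMp] at hconv
    have hend : ((M - t) / (M - m)) * m ^ p + ((t - m) / (M - m)) * M ^ p = a₀ + b₀ * t := by
      rw [ha₀_def, hb₀_def]; field_simp; ring
    calc F t ≤ ((M - t) / (M - m)) * m ^ p + ((t - m) / (M - m)) * M ^ p := hconv
      _ = a₀ + b₀ * t := hend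
  constructor
  · exact cfc_mono (fun x hx => hF1 x (specB hx))
      (fun x hx => (Real.continuousAt_rpow_const x p
        (Or.inl (hm.trans_le (specB hx).1).ne')).continuousWithinAt)
      (hFcont.continuousOn)
  -- Part 2
  have main : ∀ α β : ℝ, β ≤ 0 → (∀ t ∈ Set.Icc m M, F t ≤ α + β * t) →
      (∀ t ∈ Set.Ioc 0 M, α + β * t ≤ C + t ^ q) →
      cfc F B ≤ C • (1 : H →L[ℂ] H) + cfc (fun t : ℝ => t ^ q) A :=
    fun α β hβ h2 h3 => op_step A B hA0 hB0 hm hmM hAB hmB hBM hAu F hFcont q C α β hβ h2 h3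
  rcases hq.lt_or_eq with hq0 | hq0
  · -- q < 0
    have hq1 : q - 1 < 0 := by linarith
    have hqne : q ≠ 0 := hq0.ne
    set X : ℝ := (M ^ p - m ^ p) / (q * (M - m)) with hX_def
    have hX_eq : X = b₀ / q := by
      rw [hX_def, hb₀_def, div_div, mul_comm]
    have hmq1 : (0:ℝ) < m ^ (q-1) := Real.rpow_pos_of_pos hm _
    have hMq1 : (0:ℝ) < M ^ (q-1) := Real.rpow_pos_of_pos hM0 _
    rcases lt_or_ge b₀ (q * m ^ (q-1)) with hbm | hbm
    · -- case (ii) : tangent at m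
      have hb_neg : b₀ < 0 := hbm.trans (mul_neg_of_neg_of_pos hq0 hmq1)
      have hX_pos : 0 < X := hX_eq ▸ div_pos_of_neg_of_neg hb_neg hq0
      have hcond : ¬ (X ^ (1 / (q - 1)) ∈ Set.Icc m M) := by
        intro hmem
        have h1 : m ≤ X ^ (q-1)⁻¹ := by rw [← one_div]; exact hmem.1
        have h2 := (Real.le_rpow_inv_iff_of_neg hm hX_pos hq1).mp h1
        rw [hX_eq] at h2
        have := (div_le_iff_of_neg hq0).mp h2
        nlinarith
      have hCval : C = max (M ^ p - M ^ q) (m ^ p - m ^ q) := by rw [hC, if_neg hcond]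
      have hCm : m ^ p - m ^ q ≤ C := by rw [hCval]; exact le_max_right _ _
      have hbMm : b₀ * (M - m) = M ^ p - m ^ p := div_mul_cancel₀ _ hMm.ne'
      have hKC : M ^ p ≤ C + m ^ q + q * m ^ (q-1) * (M - m) := by
        have h8 : b₀ * (M - m) ≤ (q * m ^ (q-1)) * (M - m) :=
          mul_le_mul_of_nonneg_right hbm.le hMm.le
        nlinarith
      apply main (C + m ^ q - q * m ^ (q-1) * m) (q * m ^ (q-1))
        (mul_nonpos_iff.mpr (Or.inr ⟨hq0.le, hmq1.le⟩))
      · rintro t ⟨ht1, ht2⟩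
        have h9 : 0 ≤ (C + m ^ q - q * m ^ (q-1) * m - a₀) + (q * m ^ (q-1) - b₀) * t := by
          apply affine_aux (M := M) _ _ ht1 ht2
          · nlinarith [hab_m]
          · nlinarith [hab_M]
        have := hF2 t ⟨ht1, ht2⟩
        nlinarith
      · rintro t ⟨ht0, htM⟩
        have htan := tangent_aux hq0.le hm ht0
        nlinarith [htan]
    · rcases le_or_gt b₀ (q * M ^ (q-1)) with hbM | hbM
      · -- case (i) : interior maximum
        have hb_neg : b₀ < 0 := lt_of_le_of_lt hbM (mul_neg_of_neg_of_pos hq0 hMq1)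
        have hX_pos : 0 < X := hX_eq ▸ div_pos_of_neg_of_neg hb_neg hq0
        have hXm : X ≤ m ^ (q-1) := by
          rw [hX_eq]
          exact (div_le_iff_of_neg hq0).mpr (by nlinarith)
        have hXM : M ^ (q-1) ≤ X := by
          rw [hX_eq]
          exact (le_div_iff_of_neg hq0).mpr (by nlinarith)
        have hcond : X ^ (1 / (q - 1)) ∈ Set.Icc m M := by
          rw [one_div]
          exact ⟨(Real.le_rpow_inv_iff_of_neg hm hX_pos hq1).mpr hXm,
            (Real.rpow_inv_le_iff_of_neg hX_pos hM0 hq1).mpr hXM⟩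
        have hCval : C = a₀ + (q - 1) * X ^ (q / (q - 1)) := by rw [hC, if_pos hcond]
        set s := X ^ (1 / (q - 1)) with hs_def
        have hs_pos : 0 < s := Real.rpow_pos_of_pos hX_pos _
        have key1 : s ^ (q - 1) = X := by
          rw [hs_def, one_div, ← Real.rpow_mul hX_pos.le, inv_mul_cancel₀ hq1.ne, Real.rpow_one]
        have key2 : q * X = b₀ := by rw [hX_eq]; field_simp
        have key3 : s ^ q = X ^ (q / (q - 1)) := by
          rw [hs_def, one_div, ← Real.rpow_mul hX_pos.le, mul_comm, ← div_eq_mul_inv]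
        have key5 : X * s = X ^ (q / (q - 1)) := by
          have hexp : q / (q - 1) = 1 + (q - 1)⁻¹ := by
            have h := hq1.ne
            field_simp
            ring
          rw [hs_def, one_div, hexp, Real.rpow_add hX_pos, Real.rpow_one]
        apply main a₀ b₀ hb₀_np hF2
        rintro t ⟨ht0, htM⟩
        have htan := tangent_aux hq0.le hs_pos ht0
        rw [key1, key3] at htan
        have key6 : q * X * s = q * X ^ (q / (q - 1)) := by rw [← key5]; ring
        have key7 : b₀ * t = q * X * t := by rw [key2]
        linarith [htan, key6, key7, hCval.le, hCval.ge]
      · -- case (iii) : secant, tangent at M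
        have hcond : ¬ (X ^ (1 / (q - 1)) ∈ Set.Icc m M) := by
          intro hmem
          have hX0 : 0 ≤ X := by
            rw [hX_eq]
            exact div_nonneg_of_nonpos hb₀_np hq0.le
          rcases hX0.eq_or_lt with h | hX_pos
          · rw [← h, Real.zero_rpow (one_div_ne_zero hq1.ne)] at hmem
            exact absurd hmem.1 (by linarith)
          · have h1 : X ^ (q-1)⁻¹ ≤ M := by rw [← one_div]; exact hmem.2
            have h2 := (Real.rpow_inv_le_iff_of_neg hX_pos hM0 hq1).mp h1
            rw [hX_eq] at h2
            have := (le_div_iff_of_neg hq0).mp h2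
            nlinarith
        have hCval : C = max (M ^ p - M ^ q) (m ^ p - m ^ q) := by rw [hC, if_neg hcond]
        have hCM : M ^ p - M ^ q ≤ C := by rw [hCval]; exact le_max_left _ _
        apply main a₀ b₀ hb₀_np hF2
        rintro t ⟨ht0, htM⟩
        have htan := tangent_aux hq0.le hM0 ht0
        have h7 : b₀ * (t - M) ≤ (q * M ^ (q-1)) * (t - M) :=
          mul_le_mul_of_nonpos_right hbM.le (by linarith)
        nlinarith [htan]
  · -- q = 0
    subst hq0
    have hcond : ¬ (((M ^ p - m ^ p) / ((0:ℝ) * (M - m))) ^ (1 / ((0:ℝ) - 1)) ∈ Set.Icc m M) := by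
      rw [zero_mul, div_zero, Real.zero_rpow (by norm_num)]
      exact fun h => absurd h.1 (by linarith)
    have hCval : C = m ^ p - 1 := by
      rw [hC, if_neg hcond, Real.rpow_zero, Real.rpow_zero]
      exact max_eq_right (by linarith)
    apply main (m ^ p) 0 le_rfl
    · rintro t ⟨ht1, ht2⟩
      have hlam : 0 ≤ (M - t) / (M - m) := div_nonneg (by linarith) hMm.le
      have hmu : 0 ≤ (t - m) / (M - m) := div_nonneg (by linarith) hMm.le
      have hsum : (M - t) / (M - m) + (t - m) / (M - m) = 1 := by field_simp; ring
      have hloglog : Real.log (M ^ p) ≤ Real.log (m ^ p) := Real.log_le_log hMp hpm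
      have h10 : ((t - m) / (M - m)) * Real.log (M ^ p) ≤ ((t - m) / (M - m)) * Real.log (m ^ p) :=
        mul_le_mul_of_nonneg_left hloglog hmu
      have h11 : ((M - t) / (M - m)) * Real.log (m ^ p) + ((t - m) / (M - m)) * Real.log (m ^ p)
          = Real.log (m ^ p) := by rw [← add_mul, hsum, one_mul]
      have harg : ((M - t) / (M - m)) * Real.log (m ^ p) + ((t - m) / (M - m)) * Real.log (M ^ p)
          ≤ Real.log (m ^ p) := by linarith
      calc F t ≤ Real.exp (Real.log (m ^ p)) := Real.exp_le_exp.mpr harg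
        _ = m ^ p := Real.exp_log hmp
        _ = m ^ p + 0 * t := by ring
    · rintro t ⟨ht0, htM⟩
      rw [Real.rpow_zero]
      linarith [hCval.ge]
end
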